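/- Let $a = \cosh l_1$, $b = \cosh l_2$, $c = \cosh l_3$ with $l_1,l_2,l_3$ sides of a hyperbolic triangle, and $x = \cosh r_1$, $y = \cosh r_2$, $z = \cosh r_3$. Then the matrix $M = G \cdot D \cdot K$ is symmetric, where $G = \begin{pmatrix} 1-a^2 & ab-c & ca-b \\ ab-c & 1-b^2 & bc-a \\ ca-b & bc-a & 1-c^2 \end{pmatrix}$, $D = \mathrm{diag}(\tfrac{1}{a^2-1}, \tfrac{1}{b^2-1}, \tfrac{1}{c^2-1})$, and $K = \begin{pmatrix} 0 & ay-z & az-y \\ bx-z & 0 & bz-x \\ cx-y & cy-x & 0 \end{pmatrix}$. In particular $M_{12} = M_{21} = z - \frac{ac-b}{c^2-1} x - \frac{bc-a}{c^2-1} y$ and the analogous identities hold for the other off-diagonal pairs. -/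

import Mathlib

set_option maxHeartbeats 1600000 in
theorem hyperbolic_jacobian_symmetric
    (l1 l2 l3 r1 r2 r3 : ℝ)
    (hl1 : 0 < l1) (hl2 : 0 < l2) (hl3 : 0 < l3)
    (t1 : l1 < l2 + l3) (t2 : l2 < l3 + l1) (t3 : l3 < l1 + l2)
    (a b c x y z : ℝ)
    (ha : a = Real.cosh l1) (hb : b = Real.cosh l2) (hc : c = Real.cosh l3)
    (hx : x = Real.cosh r1) (hy : y = Real.cosh r2) (hz : z = Real.cosh r3)
    (G D K M : Matrix (Fin 3) (Fin 3) ℝ)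
    (hG : G = Matrix.of ![![1 - a ^ 2, a * b - c, c * a - b],
                          ![a * b - c, 1 - b ^ 2, b * c - a],
                          ![c * a - b, b * c - a, 1 - c ^ 2]])
    (hD : D = Matrix.diagonal ![1 / (a ^ 2 - 1), 1 / (b ^ 2 - 1), 1 / (c ^ 2 - 1)])
    (hK : K = Matrix.of ![![0, a * y - z, a * z - y],
                          ![b * x - z, 0, b * z - x],
                          ![c * x - y, c * y - x, 0]])
    (hM : M = G * D * K) :
    M.IsSymm ∧
    M 0 1 = z - (a * c - b) / (c ^ 2 - 1) * x - (b * c - a) / (c ^ 2 - 1) * y ∧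
    M 1 0 = z - (a * c - b) / (c ^ 2 - 1) * x - (b * c - a) / (c ^ 2 - 1) * y := by
  have ha1 : 1 < a := ha ▸ (Real.one_lt_cosh.mpr hl1.ne')
  have hb1 : 1 < b := hb ▸ (Real.one_lt_cosh.mpr hl2.ne')
  have hc1 : 1 < c := hc ▸ (Real.one_lt_cosh.mpr hl3.ne')
  have ha2 : a ^ 2 - 1 ≠ 0 := by nlinarith
  have hb2 : b ^ 2 - 1 ≠ 0 := by nlinarith
  have hc2 : c ^ 2 - 1 ≠ 0 := by nlinarith
  have hD' : D = Matrix.of ![![1 / (a ^ 2 - 1), 0, 0],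
                             ![0, 1 / (b ^ 2 - 1), 0],
                             ![0, 0, 1 / (c ^ 2 - 1)]] := by
    rw [hD]; ext i j; fin_cases i <;> fin_cases j <;> simp [Matrix.diagonal, Matrix.vecHead, Matrix.vecTail]
  have hM' : M = Matrix.of ![![1 - a ^ 2, a * b - c, c * a - b],
                          ![a * b - c, 1 - b ^ 2, b * c - a],
                          ![c * a - b, b * c - a, 1 - c ^ 2]] *
      Matrix.of ![![1 / (a ^ 2 - 1), 0, 0],
                  ![0, 1 / (b ^ 2 - 1), 0],
                  ![0, 0, 1 / (c ^ 2 - 1)]] *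
      Matrix.of ![![0, a * y - z, a * z - y],
                  ![b * x - z, 0, b * z - x],
                  ![c * x - y, c * y - x, 0]] := by
    rw [hM, hG, hD', hK]
  rw [Matrix.mul_fin_three, Matrix.mul_fin_three] at hM'
  refine ⟨?_, ?_, ?_⟩
  · rw [Matrix.IsSymm]
    ext i j
    fin_cases i <;> fin_cases j <;>
      simp only [hM', Matrix.transpose_apply, Matrix.of_apply, Matrix.cons_val',
        Matrix.cons_val_zero, Matrix.cons_val_one, Matrix.head_cons, Matrix.empty_val',
        Matrix.cons_val_fin_one, Matrix.cons_val_two, Matrix.tail_cons, Matrix.head_fin_const, Fin.reduceFinMk, Matrix.cons_val] <;>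
      field_simp <;> ring
  · simp only [hM', Matrix.of_apply, Matrix.cons_val', Matrix.cons_val_zero, Matrix.cons_val_one,
      Matrix.head_cons, Matrix.empty_val', Matrix.cons_val_fin_one]
    field_simp
    ring
  · simp only [hM', Matrix.of_apply, Matrix.cons_val', Matrix.cons_val_zero, Matrix.cons_val_one,
      Matrix.head_cons, Matrix.empty_val', Matrix.cons_val_fin_one]
    field_simp
    ring
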